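/- Let h : (c,d) → ℝ be twice differentiable at x, let ψ, φ be positive solutions of (A−α)v = 0 with φ decreasing, F = ψ/φ strictly increasing and differentiable, and set H(y) = (h/φ)(F^{-1}(y)). Then H'(F(x)) = (1/F'(x))·(h/φ)'(x), and H''(F(x)) has the same sign as (A−α)h(x), i.e., H''(F(x))·[(A−α)h(x)] ≥ 0, with strict inequality whenever H''(F(x)) ≠ 0. -/

import Mathlib

open Filter Topology

/-- First and second derivative of a product of two `C²` functions. -/
lemma deriv2_mul_aux (u v : ℝ → ℝ) (hu : ContDiff ℝ 2 u) (hv : ContDiff ℝ 2 v) (t : ℝ) :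
    deriv (fun s => u s * v s) t = deriv u t * v t + u t * deriv v t ∧
    deriv (deriv (fun s => u s * v s)) t =
      deriv (deriv u) t * v t + 2 * deriv u t * deriv v t + u t * deriv (deriv v) t := by
  have hud : Differentiable ℝ u := hu.differentiable two_ne_zero
  have hvd : Differentiable ℝ v := hv.differentiable two_ne_zero
  have hu' : ContDiff ℝ 1 (deriv u) := by
    have := (contDiff_succ_iff_deriv (n := 1)).mp (by exact_mod_cast hu)
    exact this.2.2
  have hv' : ContDiff ℝ 1 (deriv v) := by
    have := (contDiff_succ_iff_deriv (n := 1)).mp (by exact_mod_cast hv)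
    exact this.2.2
  have hud' : Differentiable ℝ (deriv u) := hu'.differentiable one_ne_zero
  have hvd' : Differentiable ℝ (deriv v) := hv'.differentiable one_ne_zero
  have h1 : deriv (fun s => u s * v s) = fun s => deriv u s * v s + u s * deriv v s := by
    funext s; exact deriv_mul (hud s) (hvd s)
  refine ⟨by rw [h1], ?_⟩
  rw [h1]
  rw [deriv_fun_add (f := fun s => deriv u s * v s) (g := fun s => u s * deriv v s)
      ((hud'.mul hvd) t) ((hud.mul hvd') t),
    deriv_fun_mul (hud' t) (hvd t), deriv_fun_mul (hud t) (hvd' t)]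
  ring

/-- With `ψ, φ` the increasing/decreasing solutions of `(A-α)v = 0`, `F = ψ/φ` strictly
increasing with `F' > 0`, and `H(y) = (h/φ)(F⁻¹(y))`: then
`H'(F(x)) = (1/F'(x))·(h/φ)'(x)`, and `H''(F(x))` has the same sign as `(A-α)h(x)`:
`H''(F(x))·[(A-α)h(x)] ≥ 0`, with strict inequality whenever `H''(F(x)) ≠ 0`. -/
theorem stmt6 (α x : ℝ) (μ σ h ψ φ F H : ℝ → ℝ)
    (hσ : ∀ t, 0 < σ t) (hα : 0 < α)
    (hψpos : ∀ t, 0 < ψ t) (hφpos : ∀ t, 0 < φ t)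
    (hψmono : StrictMono ψ) (hφanti : StrictAnti φ)
    (hψode : ∀ t, σ t ^ 2 / 2 * deriv (deriv ψ) t + μ t * deriv ψ t - α * ψ t = 0)
    (hφode : ∀ t, σ t ^ 2 / 2 * deriv (deriv φ) t + μ t * deriv φ t - α * φ t = 0)
    (hF : F = fun t => ψ t / φ t) (hFmono : StrictMono F)
    (hF' : ∀ t, 0 < deriv F t)
    (hH : ∀ t, H (F t) = h t / φ t)
    (hh2 : ContDiff ℝ 2 h) (hψ2 : ContDiff ℝ 2 ψ) (hφ2 : ContDiff ℝ 2 φ)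
    (hH2 : ContDiffAt ℝ 2 H (F x)) :
    deriv H (F x) = (1 / deriv F x) * deriv (fun t => h t / φ t) x ∧
    deriv (deriv H) (F x)
        * (σ x ^ 2 / 2 * deriv (deriv h) x + μ x * deriv h x - α * h x) ≥ 0 ∧
    (deriv (deriv H) (F x) ≠ 0 →
      deriv (deriv H) (F x)
        * (σ x ^ 2 / 2 * deriv (deriv h) x + μ x * deriv h x - α * h x) > 0) := by
  have hφne : ∀ t, φ t ≠ 0 := fun t => (hφpos t).ne'
  set G : ℝ → ℝ := fun t => h t / φ t with hGdef
  have hG2 : ContDiff ℝ 2 G := hh2.div hφ2 hφne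
  have hF2 : ContDiff ℝ 2 F := by rw [hF]; exact hψ2.div hφ2 hφne
  have hFd : Differentiable ℝ F := hF2.differentiable two_ne_zero
  have hF'cd : ContDiff ℝ 1 (deriv F) := by
    have := (contDiff_succ_iff_deriv (n := 1)).mp (by exact_mod_cast hF2)
    exact this.2.2
  have hF'd : Differentiable ℝ (deriv F) := hF'cd.differentiable one_ne_zero
  -- h = G * φ and ψ = F * φ
  have hhe : h = fun t => G t * φ t := by
    funext t; exact (div_mul_cancel₀ (h t) (hφne t)).symm
  have hψe : ψ = fun t => F t * φ t := by
    rw [hF]; funext t; exact (div_mul_cancel₀ (ψ t) (hφne t)).symm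
  -- G = H ∘ F
  have hGH : G = H ∘ F := funext fun t => (hH t).symm
  -- open neighborhood where H is C²
  obtain ⟨u, hu_mem, hu_cd⟩ := hH2.contDiffOn le_rfl (by simp)
  obtain ⟨v, hvu, hv_open, hv_mem⟩ := mem_nhds_iff.mp hu_mem
  have hv_cd : ContDiffOn ℝ 2 H v := hu_cd.mono hvu
  have hHdiff : ∀ y ∈ v, DifferentiableAt ℝ H y := fun y hy =>
    (hv_cd.differentiableOn two_ne_zero y hy).differentiableAt (hv_open.mem_nhds hy)
  have hH'cd : ContDiffOn ℝ 1 (deriv H) v :=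
    hv_cd.deriv_of_isOpen hv_open (by norm_num)
  have hH'diff : DifferentiableAt ℝ (deriv H) (F x) :=
    (hH'cd.differentiableOn one_ne_zero (F x) hv_mem).differentiableAt (hv_open.mem_nhds hv_mem)
  -- first derivative of G via chain rule
  have hderivG : ∀ t, F t ∈ v → deriv G t = deriv H (F t) * deriv F t := by
    intro t ht
    rw [hGH]
    exact deriv_comp t (hHdiff _ ht) (hFd t)
  have hG1 : deriv G x = deriv H (F x) * deriv F x := hderivG x hv_mem
  -- second derivative of G
  have hev : ∀ᶠ t in 𝓝 x, deriv G t = deriv H (F t) * deriv F t := by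
    have : ∀ᶠ t in 𝓝 x, F t ∈ v :=
      (hFd x).continuousAt.preimage_mem_nhds (hv_open.mem_nhds hv_mem)
    filter_upwards [this] with t ht using hderivG t ht
  have hG2eq : deriv (deriv G) x = deriv (fun t => deriv H (F t) * deriv F t) x := by
    apply Filter.EventuallyEq.deriv_eq
    exact hev
  have hcompd : DifferentiableAt ℝ (fun t => deriv H (F t)) x := hH'diff.comp x (hFd x)
  have hG2x : deriv (deriv G) x =
      deriv (deriv H) (F x) * deriv F x * deriv F x + deriv H (F x) * deriv (deriv F) x := by
    rw [hG2eq, deriv_fun_mul hcompd (hF'd x)]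
    have : deriv (fun t => deriv H (F t)) x = deriv (deriv H) (F x) * deriv F x :=
      deriv_comp x hH'diff (hFd x)
    rw [this]
  -- product rules for h = G*φ and ψ = F*φ
  obtain ⟨hh1e, hh2e⟩ := deriv2_mul_aux G φ hG2 hφ2 x
  obtain ⟨hψ1e, hψ2e⟩ := deriv2_mul_aux F φ hF2 hφ2 x
  rw [← hhe] at hh1e hh2e
  rw [← hψe] at hψ1e hψ2e
  have hf1 : deriv F x ≠ 0 := (hF' x).ne'
  -- ODE facts at x
  have eψ := hψode x
  have eφ := hφode x
  rw [hψ1e, hψ2e, show ψ x = F x * φ x by rw [hψe]] at eψ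
  -- key identity
  have key : σ x ^ 2 / 2 * deriv (deriv h) x + μ x * deriv h x - α * h x =
      σ x ^ 2 / 2 * φ x * (deriv F x) ^ 2 * deriv (deriv H) (F x) := by
    have hhx : h x = G x * φ x := by rw [hhe]
    have hQ : deriv F x * (2 * (σ x ^ 2 / 2) * deriv φ x + μ x * φ x)
        + σ x ^ 2 / 2 * deriv (deriv F) x * φ x = 0 := by
      linear_combination eψ - F x * eφ
    rw [hh1e, hh2e, hhx, hG1, hG2x]
    linear_combination G x * eφ + deriv H (F x) * hQ
  have hpos : 0 < σ x ^ 2 / 2 * φ x * (deriv F x) ^ 2 :=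
    mul_pos (mul_pos (div_pos (pow_pos (hσ x) 2) two_pos) (hφpos x)) (pow_pos (hF' x) 2)
  refine ⟨?_, ?_, ?_⟩
  · rw [hG1]; field_simp
  · rw [key]; nlinarith [sq_nonneg (deriv (deriv H) (F x)), hpos]
  · intro hne
    rw [key]
    have h2 : 0 < deriv (deriv H) (F x) ^ 2 :=
      lt_of_le_of_ne (sq_nonneg _) (Ne.symm (pow_ne_zero 2 hne))
    nlinarith [hpos, h2]
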